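/- arXiv:0806.0120 — 2 statements merged into one kernel-verified Lean document; each statement's English description precedes it below -/
import Mathlib

section
/- For any finite family F of functions from a set X to a set Z with |Z| ≥ 2 and |X| ≥ 2: if F is two-universal, then for every probability distribution P on X and independent uniformly random f ∈ F, the collision probability of (f, f(x)) with x ~ P satisfies Pr[f(x) = f(x')] ≤ max_x P(x) + 1/|Z|, where x, x' are i.i.d. from P. -/
open scoped Classical BigOperators

/-- If a finite family `f : ι → X → Z` is two-universal, then for any distribution `P`
on `X`, the collision probability of `(f, f(x))` with `x ~ P`, `f` uniform, i.e.
`Pr[f(x) = f(x')]` for `x, x'` i.i.d. `~ P`, is at most `max_x P x + 1/|Z|`. -/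
theorem stmt_1 {X Z ι : Type*} [Fintype X] [Fintype Z] [Fintype ι] [Nonempty ι] [Nonempty X]
    (hX : 2 ≤ Fintype.card X) (hZ : 2 ≤ Fintype.card Z)
    (f : ι → X → Z)
    (huniv : ∀ x x' : X, x ≠ x' →
      ((Finset.univ.filter fun i => f i x = f i x').card : ℝ) / (Fintype.card ι : ℝ)
        ≤ 1 / (Fintype.card Z : ℝ))
    (P : X → ℝ) (hP : ∀ x, 0 ≤ P x) (hPsum : ∑ x, P x = 1) :
    (1 / (Fintype.card ι : ℝ)) *
        ∑ i, ∑ x, ∑ x', P x * P x' * (if f i x = f i x' then 1 else 0)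
      ≤ Finset.univ.sup' Finset.univ_nonempty P + 1 / (Fintype.card Z : ℝ) := by
  have hNpos : (0:ℝ) < (Fintype.card ι : ℝ) := by exact_mod_cast Fintype.card_pos
  have hZpos : (0:ℝ) < (Fintype.card Z : ℝ) := by
    have : (0:ℕ) < Fintype.card Z := by omega
    exact_mod_cast this
  set N : ℝ := (Fintype.card ι : ℝ) with hN
  set M := Finset.univ.sup' Finset.univ_nonempty P with hM
  have hMP : ∀ x, P x ≤ M := fun x => Finset.le_sup' P (Finset.mem_univ x)
  have hM0 : 0 ≤ M := le_trans (hP (Classical.arbitrary X)) (hMP _)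
  set c : X → X → ℝ := fun x x' => ((Finset.univ.filter fun i => f i x = f i x').card : ℝ)
    with hc
  have hc0 : ∀ x x', 0 ≤ c x x' := by intro x x'; positivity
  have hcN : ∀ x x', c x x' ≤ N := by
    intro x x'
    have := Finset.card_filter_le (Finset.univ : Finset ι) (fun i => f i x = f i x')
    simpa [hc, hN, Finset.card_univ] using (Nat.cast_le (α := ℝ)).mpr this
  have step1 : ∑ i, ∑ x, ∑ x', P x * P x' * (if f i x = f i x' then 1 else 0)
      = ∑ x, ∑ x', P x * P x' * c x x' := by
    rw [Finset.sum_comm]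
    refine Finset.sum_congr rfl fun x _ => ?_
    rw [Finset.sum_comm]
    refine Finset.sum_congr rfl fun x' _ => ?_
    rw [← Finset.mul_sum, Finset.sum_boole]
  have step2 : ∑ x, ∑ x', P x * P x' * c x x'
      ≤ ∑ x, ∑ x', ((if x = x' then N * (M * P x') else 0)
          + N * (1 / (Fintype.card Z : ℝ)) * (P x * P x')) := by
    refine Finset.sum_le_sum fun x _ => Finset.sum_le_sum fun x' _ => ?_
    by_cases h : x = x'
    · subst h
      rw [if_pos rfl]
      have h1 : P x * P x * c x x ≤ N * (M * P x) := by
        calc P x * P x * c x x ≤ P x * P x * N :=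
              mul_le_mul_of_nonneg_left (hcN x x) (mul_nonneg (hP x) (hP x))
          _ ≤ M * P x * N :=
              mul_le_mul_of_nonneg_right (mul_le_mul_of_nonneg_right (hMP x) (hP x)) hNpos.le
          _ = N * (M * P x) := by ring
      have h2 : 0 ≤ N * (1 / (Fintype.card Z : ℝ)) * (P x * P x) := by
        have := hP x; positivity
      linarith
    · simp only [if_neg h, zero_add]
      have hcb : c x x' ≤ N * (1 / (Fintype.card Z : ℝ)) := by
        have := huniv x x' h
        rw [div_le_iff₀ hNpos] at this
        linarith [this]
      have h3 := mul_le_mul_of_nonneg_left hcb (mul_nonneg (hP x) (hP x'))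
      calc P x * P x' * c x x' = P x * P x' * c x x' := rfl
        _ ≤ P x * P x' * (N * (1 / (Fintype.card Z : ℝ))) := h3
        _ = N * (1 / (Fintype.card Z : ℝ)) * (P x * P x') := by ring
  have step3 : ∑ x, ∑ x', ((if x = x' then N * (M * P x') else 0)
          + N * (1 / (Fintype.card Z : ℝ)) * (P x * P x'))
      = N * M + N * (1 / (Fintype.card Z : ℝ)) := by
    have e1 : ∀ x : X, ∑ x', (if x = x' then N * (M * P x') else 0) = N * (M * P x) := by
      intro x
      rw [Finset.sum_ite_eq]
      simp
    simp only [Finset.sum_add_distrib, e1]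
    rw [← Finset.mul_sum, ← Finset.mul_sum]
    have : ∀ x : X, ∑ x', N * (1 / (Fintype.card Z : ℝ)) * (P x * P x')
        = N * (1 / (Fintype.card Z : ℝ)) * P x := by
      intro x
      rw [← Finset.mul_sum, ← Finset.mul_sum, hPsum]
      ring
    rw [Finset.sum_congr rfl fun x _ => this x, ← Finset.mul_sum, hPsum]
    ring
  rw [step1]
  have hle : ∑ x, ∑ x', P x * P x' * c x x' ≤ N * M + N * (1 / (Fintype.card Z : ℝ)) := by
    rw [← step3]; exact step2
  rw [div_mul_eq_mul_div, one_mul, div_le_iff₀ hNpos]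
  calc ∑ x, ∑ x', P x * P x' * c x x' ≤ N * M + N * (1 / (Fintype.card Z : ℝ)) := hle
    _ = (M + 1 / (Fintype.card Z : ℝ)) * N := by ring
end

section
/- Leftover hash lemma (classical): let X be a random variable on {0,1}^n, E a finite random variable, F uniform on a two-universal family of functions from {0,1}^n to {0,1}^ℓ, independent of (X,E). Then (1/2)‖P_{F(X) F E} − U_ℓ × P_{F E}‖₁ ≤ (1/2)·2^{−(H_min(X|E) − ℓ)/2}, where U_ℓ is uniform on {0,1}^ℓ. In particular, if ℓ ≤ H_min(X|E) − 2 log₂(1/ε_PA) then the extracted key is ε'-close to uniform with ε' ≤ ε_PA²/2 ≤ ε_PA. -/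
open scoped Classical BigOperators

open Finset


private lemma lhl_sum_ite_prod {X Z : Type*} [Fintype Z] [DecidableEq Z] (g : X → ℝ) (a b : Z) (x x' : X) :
    ∑ z : Z, (if a = z then g x else 0) * (if b = z then g x' else 0)
      = if a = b then g x * g x' else 0 := by
  rw [Finset.sum_eq_single a]
  · by_cases h : a = b <;> simp [h, eq_comm]
  · intro z _ hz
    simp [Ne.symm hz]
  · simp

private lemma lhl_core {X Z ι : Type*} [Fintype X] [Fintype Z] [Fintype ι] [Nonempty ι]
    [Nonempty Z] [Nonempty X] [DecidableEq Z] (f : ι → X → Z)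
    (huniv : ∀ x x' : X, x ≠ x' →
      ((Finset.univ.filter fun i => f i x = f i x').card : ℝ) / (Fintype.card ι : ℝ)
        ≤ 1 / (Fintype.card Z : ℝ))
    (g : X → ℝ) (hg : ∀ x, 0 ≤ g x) :
    ∑ i : ι, ∑ z : Z,
        |(1 / (Fintype.card ι : ℝ)) * (∑ x, if f i x = z then g x else 0) -
          (1 / (Fintype.card Z : ℝ)) * (1 / (Fintype.card ι : ℝ)) * (∑ x, g x)|
      ≤ Real.sqrt ((Fintype.card Z : ℝ) * ∑ x, (g x) ^ 2) := by
  set N : ℝ := (Fintype.card ι : ℝ) with hNdef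
  set M : ℝ := (Fintype.card Z : ℝ) with hMdef
  have hN : 0 < N := by rw [hNdef]; exact_mod_cast Fintype.card_pos
  have hM : 0 < M := by rw [hMdef]; exact_mod_cast Fintype.card_pos
  set p : ℝ := ∑ x, g x with hpdef
  set T : ι → Z → ℝ := fun i z => ∑ x, if f i x = z then g x else 0 with hTdef
  -- row sums
  have hT : ∀ i, ∑ z, T i z = p := by
    intro i
    rw [hTdef]
    simp only
    rw [Finset.sum_comm]
    simp [Finset.sum_ite_eq, hpdef]
  -- expand square
  have hsq : ∀ i, ∑ z, (T i z - p / M) ^ 2 = (∑ z, (T i z) ^ 2) - p ^ 2 / M := by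
    intro i
    have h1 : ∀ z : Z, (T i z - p / M) ^ 2
        = (T i z) ^ 2 - (2 * (p / M)) * T i z + (p / M) ^ 2 := by intro z; ring
    rw [Finset.sum_congr rfl fun z _ => h1 z]
    rw [Finset.sum_add_distrib, Finset.sum_sub_distrib, ← Finset.mul_sum, hT i,
      Finset.sum_const, Finset.card_univ, nsmul_eq_mul, ← hMdef]
    field_simp
    ring
  -- second moment
  have hTsq : ∀ i, ∑ z, (T i z) ^ 2
      = ∑ x, ∑ x', if f i x = f i x' then g x * g x' else 0 := by
    intro i
    have h1 : ∀ z, (T i z) ^ 2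
        = ∑ x, ∑ x', (if f i x = z then g x else 0) * (if f i x' = z then g x' else 0) := by
      intro z
      rw [sq, hTdef]
      simp only
      rw [Finset.sum_mul_sum]
    rw [Finset.sum_congr rfl fun z _ => h1 z, Finset.sum_comm]
    refine Finset.sum_congr rfl fun x _ => ?_
    rw [Finset.sum_comm]
    exact Finset.sum_congr rfl fun x' _ => lhl_sum_ite_prod g _ _ x x'
  -- collision bound
  have hcoll : ∑ i, ∑ x, ∑ x', (if f i x = f i x' then g x * g x' else 0)
      ≤ N * (∑ x, (g x) ^ 2) + (N / M) * p ^ 2 := by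
    rw [Finset.sum_comm]
    have hinner : ∀ x : X, ∑ i, ∑ x', (if f i x = f i x' then g x * g x' else 0)
        = ∑ x', ((Finset.univ.filter fun i => f i x = f i x').card : ℝ) * (g x * g x') := by
      intro x
      rw [Finset.sum_comm]
      refine Finset.sum_congr rfl fun x' _ => ?_
      rw [← Finset.sum_filter, Finset.sum_const, nsmul_eq_mul]
    rw [Finset.sum_congr rfl fun x _ => hinner x]
    have hsplit : ∀ x : X, ∑ x', ((Finset.univ.filter fun i => f i x = f i x').card : ℝ)
          * (g x * g x')
        ≤ N * (g x) ^ 2 + (N / M) * ∑ x', g x * g x' := by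
      intro x
      rw [← Finset.add_sum_erase _ _ (Finset.mem_univ x),
        ← Finset.add_sum_erase _ (fun x' => g x * g x') (Finset.mem_univ x)]
      have hdiag : ((Finset.univ.filter fun i => f i x = f i x).card : ℝ) * (g x * g x)
          ≤ N * (g x) ^ 2 := by
        rw [← sq]
        apply mul_le_mul_of_nonneg_right _ (sq_nonneg _)
        rw [hNdef]
        exact_mod_cast (Finset.card_filter_le _ _).trans_eq Finset.card_univ
      have hoff : ∑ x' ∈ Finset.univ.erase x,
            ((Finset.univ.filter fun i => f i x = f i x').card : ℝ) * (g x * g x')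
          ≤ ∑ x' ∈ Finset.univ.erase x, (N / M) * (g x * g x') := by
        refine Finset.sum_le_sum fun x' hx' => ?_
        have hne : x ≠ x' := fun h => (Finset.mem_erase.mp hx').1 h.symm
        have := huniv x x' hne
        have hcard : ((Finset.univ.filter fun i => f i x = f i x').card : ℝ) ≤ N / M := by
          rw [div_le_div_iff₀ hN hM] at this
          rw [le_div_iff₀ hM]
          linarith [this]
        exact mul_le_mul_of_nonneg_right hcard (mul_nonneg (hg x) (hg x'))
      calc _ ≤ N * (g x) ^ 2 + ∑ x' ∈ Finset.univ.erase x, (N / M) * (g x * g x') :=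
              add_le_add hdiag hoff
        _ ≤ N * (g x) ^ 2 + (N / M) * (g x * g x + ∑ x' ∈ Finset.univ.erase x, g x * g x') := by
            rw [mul_add, Finset.mul_sum]
            have h0 : 0 ≤ (N / M) * (g x * g x) :=
              mul_nonneg (by positivity) (mul_nonneg (hg x) (hg x))
            linarith
    calc ∑ x, ∑ x', ((Finset.univ.filter fun i => f i x = f i x').card : ℝ) * (g x * g x')
        ≤ ∑ x, (N * (g x) ^ 2 + (N / M) * ∑ x', g x * g x') :=
          Finset.sum_le_sum fun x _ => hsplit x
      _ = N * (∑ x, (g x) ^ 2) + (N / M) * p ^ 2 := by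
          rw [Finset.sum_add_distrib, ← Finset.mul_sum, ← Finset.mul_sum]
          congr 1
          rw [hpdef, sq, Finset.sum_mul]
          congr 1
          exact Finset.sum_congr rfl fun x _ => (Finset.mul_sum _ _ _).symm
  -- total square bound
  have hK : ∑ i, ∑ z, (T i z - p / M) ^ 2 ≤ N * ∑ x, (g x) ^ 2 := by
    rw [Finset.sum_congr rfl fun i _ => hsq i, Finset.sum_sub_distrib,
      Finset.sum_const, Finset.card_univ, nsmul_eq_mul, ← hNdef]
    have := hcoll
    rw [Finset.sum_congr rfl fun i (_ : i ∈ Finset.univ) => hTsq i] at *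
    have hNM : N * (p ^ 2 / M) = (N / M) * p ^ 2 := by ring
    linarith
  -- Cauchy-Schwarz
  have habs : ∑ i, ∑ z, |T i z - p / M| ≤ N * Real.sqrt (M * ∑ x, (g x) ^ 2) := by
    have h1 : ∑ i, ∑ z, |T i z - p / M|
        = ∑ q : ι × Z, 1 * |T q.1 q.2 - p / M| := by
      rw [Fintype.sum_prod_type]; simp
    have h2 := Real.sum_mul_le_sqrt_mul_sqrt Finset.univ (fun _ : ι × Z => (1 : ℝ))
      (fun q => |T q.1 q.2 - p / M|)
    rw [h1]
    have h3 : ∑ q : ι × Z, ((1 : ℝ)) ^ 2 = N * M := by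
      simp [Finset.card_univ, hNdef, hMdef]
    have h4 : ∑ q : ι × Z, |T q.1 q.2 - p / M| ^ 2 ≤ N * ∑ x, (g x) ^ 2 := by
      calc ∑ q : ι × Z, |T q.1 q.2 - p / M| ^ 2
          = ∑ i, ∑ z, (T i z - p / M) ^ 2 := by
            rw [Fintype.sum_prod_type]; simp [sq_abs]
        _ ≤ _ := hK
    calc ∑ q : ι × Z, 1 * |T q.1 q.2 - p / M|
        ≤ Real.sqrt (∑ q : ι × Z, (1:ℝ) ^ 2) * Real.sqrt (∑ q : ι × Z, |T q.1 q.2 - p / M| ^ 2) :=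
          h2
      _ ≤ Real.sqrt (N * M) * Real.sqrt (N * ∑ x, (g x) ^ 2) := by
          rw [h3]
          exact mul_le_mul_of_nonneg_left (Real.sqrt_le_sqrt h4) (Real.sqrt_nonneg _)
      _ = N * Real.sqrt (M * ∑ x, (g x) ^ 2) := by
          rw [← Real.sqrt_mul (by positivity),
            show N * M * (N * ∑ x, (g x) ^ 2) = N ^ 2 * (M * ∑ x, (g x) ^ 2) by ring,
            Real.sqrt_mul (by positivity), Real.sqrt_sq hN.le]
  -- conclude
  have hrw : ∀ i z, |(1 / N) * T i z - (1 / M) * (1 / N) * p| = (1 / N) * |T i z - p / M| := by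
    intro i z
    have h1 : (1 / N) * T i z - (1 / M) * (1 / N) * p = (1 / N) * (T i z - p / M) := by
      field_simp
    rw [h1, abs_mul, abs_of_pos (show (0:ℝ) < 1 / N by positivity)]
  calc ∑ i : ι, ∑ z : Z, |(1 / N) * T i z - (1 / M) * (1 / N) * p|
      = (1 / N) * ∑ i, ∑ z, |T i z - p / M| := by
        simp_rw [hrw, Finset.mul_sum]
    _ ≤ (1 / N) * (N * Real.sqrt (M * ∑ x, (g x) ^ 2)) := by
        exact mul_le_mul_of_nonneg_left habs (by positivity)
    _ = Real.sqrt (M * ∑ x, (g x) ^ 2) := by field_simp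


/-- Leftover hash lemma (classical): hashing `X` with a uniformly random function `F`
from a two-universal family from `{0,1}^n` to `{0,1}^ℓ` (independent of `(X,E)`) yields a
key whose distance from uniform, given `F` and `E`, is at most
`(1/2)·2^{-(H_min(X|E) − ℓ)/2}`, where `H_min(X|E) = -log₂ ∑_e max_x P(x,e)`. -/
theorem stmt_15 {ℰ ι : Type*} [Fintype ℰ] [Fintype ι] [Nonempty ι] (n ℓ : ℕ)
    (f : ι → (Fin n → Bool) → (Fin ℓ → Bool))
    (huniv : ∀ x x' : Fin n → Bool, x ≠ x' →
      ((Finset.univ.filter fun i => f i x = f i x').card : ℝ) / (Fintype.card ι : ℝ)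
        ≤ 1 / 2 ^ ℓ)
    (P : (Fin n → Bool) × ℰ → ℝ) (hP : ∀ p, 0 ≤ P p) (hPsum : ∑ p, P p = 1) :
    (1 / 2) * ∑ i : ι, ∑ z : Fin ℓ → Bool, ∑ e : ℰ,
        |(1 / (Fintype.card ι : ℝ)) * (∑ x, if f i x = z then P (x, e) else 0) -
          (1 / 2 ^ ℓ) * (1 / (Fintype.card ι : ℝ)) * (∑ x, P (x, e))|
      ≤ (1 / 2) * (2 : ℝ) ^
          (-((-Real.logb 2 (∑ e : ℰ, ⨆ x : Fin n → Bool, P (x, e))) - (ℓ : ℝ)) / 2) := by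
  classical
  have hcard : (Fintype.card (Fin ℓ → Bool) : ℝ) = 2 ^ ℓ := by
    rw [show Fintype.card (Fin ℓ → Bool) = 2 ^ ℓ by simp]
    push_cast
    ring
  set m : ℰ → ℝ := fun e => ⨆ x : Fin n → Bool, P (x, e) with hmdef
  set pe : ℰ → ℝ := fun e => ∑ x : Fin n → Bool, P (x, e) with hpedef
  set S : ℝ := ∑ e, m e with hSdef
  have hM0 : (0 : ℝ) < 2 ^ ℓ := by positivity
  have hm_ub : ∀ (e : ℰ) (x : Fin n → Bool), P (x, e) ≤ m e := by
    intro e x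
    have h := le_ciSup (Finite.bddAbove_range fun x : Fin n → Bool => P (x, e)) x
    simpa [hmdef] using h
  have hm_nonneg : ∀ e, 0 ≤ m e := fun e =>
    le_trans (hP (Classical.arbitrary _, e)) (hm_ub e _)
  have hpe_nonneg : ∀ e, 0 ≤ pe e := fun e => Finset.sum_nonneg fun x _ => hP _
  have hpesum : ∑ e, pe e = 1 := by
    rw [← hPsum, Fintype.sum_prod_type, Finset.sum_comm]
  have hS : 0 < S := by
    obtain ⟨q, hq⟩ : ∃ q, 0 < P q := by
      by_contra h
      push_neg at h
      have hz : ∀ q, P q = 0 := fun q => le_antisymm (h q) (hP q)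
      simp [hz] at hPsum
    have h1 : 0 < m q.2 := lt_of_lt_of_le hq (by simpa using hm_ub q.2 q.1)
    exact lt_of_lt_of_le h1 (Finset.single_le_sum (fun e _ => hm_nonneg e) (Finset.mem_univ _))
  have hrhs : (2 : ℝ) ^ (-((-Real.logb 2 S) - (ℓ : ℝ)) / 2)
      = Real.sqrt ((2 : ℝ) ^ ℓ * S) := by
    have hexp : -((-Real.logb 2 S) - (ℓ : ℝ)) / 2
        = (Real.logb 2 S + (ℓ : ℝ)) * (1 / 2) := by ring
    rw [hexp, Real.rpow_mul (by norm_num), Real.rpow_add (by norm_num),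
      Real.rpow_logb (by norm_num) (by norm_num) hS, Real.rpow_natCast, ← Real.sqrt_eq_rpow,
      mul_comm]
  rw [hrhs]
  apply mul_le_mul_of_nonneg_left _ (by norm_num : (0:ℝ) ≤ 1/2)
  have huniv' : ∀ x x' : Fin n → Bool, x ≠ x' →
      ((Finset.univ.filter fun i => f i x = f i x').card : ℝ) / (Fintype.card ι : ℝ)
        ≤ 1 / (Fintype.card (Fin ℓ → Bool) : ℝ) := by
    intro x x' h
    rw [hcard]
    exact huniv x x' h
  have hcore : ∀ e : ℰ, ∑ i : ι, ∑ z : Fin ℓ → Bool,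
        |(1 / (Fintype.card ι : ℝ)) * (∑ x, if f i x = z then P (x, e) else 0) -
          (1 / 2 ^ ℓ) * (1 / (Fintype.card ι : ℝ)) * (∑ x, P (x, e))|
      ≤ Real.sqrt ((2 : ℝ) ^ ℓ * ∑ x, (P (x, e)) ^ 2) := by
    intro e
    rw [← hcard]
    exact lhl_core f huniv' (fun x => P (x, e)) (fun x => hP _)
  calc ∑ i : ι, ∑ z : Fin ℓ → Bool, ∑ e : ℰ,
        |(1 / (Fintype.card ι : ℝ)) * (∑ x, if f i x = z then P (x, e) else 0) -
          (1 / 2 ^ ℓ) * (1 / (Fintype.card ι : ℝ)) * (∑ x, P (x, e))|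
      = ∑ e : ℰ, ∑ i : ι, ∑ z : Fin ℓ → Bool,
        |(1 / (Fintype.card ι : ℝ)) * (∑ x, if f i x = z then P (x, e) else 0) -
          (1 / 2 ^ ℓ) * (1 / (Fintype.card ι : ℝ)) * (∑ x, P (x, e))| := by
        rw [show (∑ i : ι, ∑ z : Fin ℓ → Bool, ∑ e : ℰ,
            |(1 / (Fintype.card ι : ℝ)) * (∑ x, if f i x = z then P (x, e) else 0) -
              (1 / 2 ^ ℓ) * (1 / (Fintype.card ι : ℝ)) * (∑ x, P (x, e))|)
          = ∑ i : ι, ∑ e : ℰ, ∑ z : Fin ℓ → Bool,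
            |(1 / (Fintype.card ι : ℝ)) * (∑ x, if f i x = z then P (x, e) else 0) -
              (1 / 2 ^ ℓ) * (1 / (Fintype.card ι : ℝ)) * (∑ x, P (x, e))|
          from Finset.sum_congr rfl fun i _ => Finset.sum_comm]
        exact Finset.sum_comm
    _ ≤ ∑ e : ℰ, Real.sqrt ((2 : ℝ) ^ ℓ * ∑ x, (P (x, e)) ^ 2) :=
        Finset.sum_le_sum fun e _ => hcore e
    _ ≤ ∑ e : ℰ, Real.sqrt ((2:ℝ) ^ ℓ) * (Real.sqrt (m e) * Real.sqrt (pe e)) := by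
        refine Finset.sum_le_sum fun e _ => ?_
        have h1 : ∑ x, (P (x, e)) ^ 2 ≤ m e * pe e := by
          rw [hpedef]
          simp only
          rw [Finset.mul_sum]
          exact Finset.sum_le_sum fun x _ => by
            rw [sq]; exact mul_le_mul_of_nonneg_right (hm_ub e x) (hP _)
        calc Real.sqrt ((2:ℝ) ^ ℓ * ∑ x, (P (x, e)) ^ 2)
            ≤ Real.sqrt ((2:ℝ) ^ ℓ * (m e * pe e)) :=
              Real.sqrt_le_sqrt (mul_le_mul_of_nonneg_left h1 hM0.le)
          _ = Real.sqrt ((2:ℝ) ^ ℓ) * (Real.sqrt (m e) * Real.sqrt (pe e)) := by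
              rw [Real.sqrt_mul hM0.le, Real.sqrt_mul (hm_nonneg e)]
    _ = Real.sqrt ((2:ℝ) ^ ℓ) * ∑ e, Real.sqrt (m e) * Real.sqrt (pe e) :=
        (Finset.mul_sum _ _ _).symm
    _ ≤ Real.sqrt ((2:ℝ) ^ ℓ) * (Real.sqrt S * Real.sqrt 1) := by
        refine mul_le_mul_of_nonneg_left ?_ (Real.sqrt_nonneg _)
        have h2 := Real.sum_sqrt_mul_sqrt_le (Finset.univ)
          (fun e => hm_nonneg e) (fun e => hpe_nonneg e)
        rwa [hpesum] at h2
    _ = Real.sqrt ((2:ℝ) ^ ℓ * S) := by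
        rw [Real.sqrt_one, mul_one, ← Real.sqrt_mul hM0.le]
end
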